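/- Anti-concentration of balls-in-bins loads: let S = ξ₁ + ... + ξ_M be a sum of q-wise independent Boolean random variables each with mean 1/M (case M = N), where q ≥ 4 is even and q² ≤ 2M. Then P[S ≥ (B_{q/2})^{2/q} / 2] ≥ (1 - q²/(2M)) · (B_{q/2})² / (2·B_q), where B_q denotes the q-th Bell number. -/

import Mathlib

open MeasureTheory Finset

/-- Stirling numbers of the second kind. -/
def stirling2 : ℕ → ℕ → ℕ
  | 0, 0 => 1
  | 0, _ + 1 => 0
  | _ + 1, 0 => 0
  | n + 1, k + 1 => (k + 1) * stirling2 n (k + 1) + stirling2 n k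

/-- Bell numbers. -/
def bell (q : ℕ) : ℕ := ∑ j ∈ Finset.range (q + 1), stirling2 q j

lemma stirling2_eq_zero_of_lt : ∀ {n j : ℕ}, n < j → stirling2 n j = 0 := by
  intro n
  induction n with
  | zero => intro j hj; cases j with
    | zero => omega
    | succ j => rfl
  | succ n ih =>
    intro j hj
    cases j with
    | zero => omega
    | succ j =>
      show (j + 1) * stirling2 n (j + 1) + stirling2 n j = 0
      rw [ih (by omega), ih (by omega)]
      ring

lemma stirling2_self (n : ℕ) : stirling2 n n = 1 := by
  induction n with
  | zero => rfl
  | succ n ih =>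
    show (n + 1) * stirling2 n (n + 1) + stirling2 n n = 1
    rw [stirling2_eq_zero_of_lt (by omega), ih]
    ring

lemma one_le_bell (k : ℕ) : 1 ≤ bell k := by
  rw [bell]
  calc 1 = stirling2 k k := (stirling2_self k).symm
    _ ≤ _ := Finset.single_le_sum (f := fun j => stirling2 k j) (fun _ _ => Nat.zero_le _)
        (Finset.mem_range.2 (by omega))

lemma image_cons {n M : ℕ} (a : Fin M) (g : Fin n → Fin M) :
    Finset.image (Fin.cons a g : Fin (n+1) → Fin M) Finset.univ
      = insert a (Finset.image g Finset.univ) := by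
  ext b
  simp only [mem_image, mem_univ, true_and, mem_insert, Fin.exists_fin_succ, Fin.cons_zero,
    Fin.cons_succ]
  tauto

lemma count_image_card (M k j : ℕ) :
    ((univ : Finset (Fin k → Fin M)).filter
        fun f => (Finset.image f Finset.univ).card = j).card
      = stirling2 k j * M.descFactorial j := by
  induction k generalizing j with
  | zero =>
    cases j with
    | zero => simp [stirling2]
    | succ j => simp [stirling2, Finset.filter_eq_empty_iff]
  | succ k ih =>
    have key : ((univ : Finset (Fin (k+1) → Fin M)).filter
        (fun f => (Finset.image f Finset.univ).card = j)).card
        = ∑ g : Fin k → Fin M, ∑ a : Fin M,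
            (if (insert a (Finset.image g Finset.univ)).card = j then 1 else 0) := by
      rw [Finset.card_filter]
      rw [← Fintype.sum_equiv (Fin.consEquiv (fun _ => Fin M))
        (fun p => if (Finset.image (Fin.cons p.1 p.2 : Fin (k+1) → Fin M) Finset.univ).card = j
           then 1 else 0)
        (fun f => if (Finset.image f Finset.univ).card = j then 1 else 0)
        (fun p => rfl)]
      rw [Fintype.sum_prod_type]
      rw [Finset.sum_comm]
      refine Finset.sum_congr rfl fun g _ => Finset.sum_congr rfl fun a _ => ?_
      rw [image_cons]
    have inner : ∀ g : Fin k → Fin M,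
        (∑ a : Fin M, if (insert a (Finset.image g Finset.univ)).card = j then 1 else 0)
        = (if (Finset.image g Finset.univ).card = j then (Finset.image g Finset.univ).card else 0)
          + (if (Finset.image g Finset.univ).card + 1 = j
              then M - (Finset.image g Finset.univ).card else 0) := by
      intro g
      set s := Finset.image g Finset.univ with hs
      rw [← Finset.sum_filter_add_sum_filter_not Finset.univ (· ∈ s)]
      congr 1
      · have h1 : Finset.univ.filter (· ∈ s) = s := by ext a; simp
        rw [h1]
        calc (∑ a ∈ s, if (insert a s).card = j then (1:ℕ) else 0)
            = ∑ a ∈ s, (if s.card = j then 1 else 0) := by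
              refine Finset.sum_congr rfl fun a ha => ?_
              rw [Finset.insert_eq_self.2 ha]
          _ = _ := by rw [Finset.sum_const, smul_eq_mul]; split_ifs <;> simp
      · calc (∑ a ∈ Finset.univ.filter (· ∉ s), if (insert a s).card = j then (1:ℕ) else 0)
            = ∑ a ∈ Finset.univ.filter (· ∉ s), (if s.card + 1 = j then 1 else 0) := by
              refine Finset.sum_congr rfl fun a ha => ?_
              rw [Finset.card_insert_of_notMem (by simpa using (Finset.mem_filter.1 ha).2)]
          _ = _ := by
              rw [Finset.sum_const, smul_eq_mul]
              have : (Finset.univ.filter (· ∉ s)).card = M - s.card := by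
                rw [Finset.filter_not, Finset.card_sdiff_of_subset (by simp)]
                simp [Finset.filter_mem_eq_inter]
              rw [this]; split_ifs <;> simp
    rw [key]
    simp only [inner]
    rw [Finset.sum_add_distrib]
    cases j with
    | zero =>
      have hz : ∀ g : Fin k → Fin M,
          (if (Finset.image g Finset.univ).card = 0 then (Finset.image g Finset.univ).card
            else 0) = 0 := by
        intro g; split_ifs with h; exacts [h, rfl]
      simp [hz, stirling2]
      exact fun h _ => h
    | succ j' =>
      have h1 : (∑ g : Fin k → Fin M,
          if (Finset.image g Finset.univ).card = j' + 1 then (Finset.image g Finset.univ).card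
          else 0) = (j' + 1) * (stirling2 k (j'+1) * M.descFactorial (j'+1)) := by
        rw [← ih (j'+1), Finset.card_filter, Finset.mul_sum]
        rw [← Finset.sum_filter_add_sum_filter_not Finset.univ
          (fun g : Fin k → Fin M => (Finset.image g Finset.univ).card = j'+1),
          ← Finset.sum_filter_add_sum_filter_not Finset.univ
          (fun g : Fin k → Fin M => (Finset.image g Finset.univ).card = j'+1)]
        congr 1
        · refine Finset.sum_congr rfl fun g hg => ?_
          have := (Finset.mem_filter.1 hg).2
          simp [this]
        · refine Finset.sum_congr rfl fun g hg => ?_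
          have := (Finset.mem_filter.1 hg).2
          simp [this]
      have h2 : (∑ g : Fin k → Fin M,
          if (Finset.image g Finset.univ).card + 1 = j' + 1
          then M - (Finset.image g Finset.univ).card else 0)
          = (M - j') * (stirling2 k j' * M.descFactorial j') := by
        rw [← ih j', Finset.card_filter, Finset.mul_sum]
        refine Finset.sum_congr rfl fun g _ => ?_
        by_cases h : (Finset.image g Finset.univ).card = j' <;> simp [h]
      rw [h1, h2]
      show _ = ((j'+1) * stirling2 k (j'+1) + stirling2 k j') * M.descFactorial (j'+1)
      rw [Nat.descFactorial_succ]
      ring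

lemma sum_pow_image_card (M k : ℕ) (x : ℝ) :
    ∑ f : Fin k → Fin M, x ^ (Finset.image f Finset.univ).card
      = ∑ j ∈ Finset.range (k+1), (stirling2 k j * M.descFactorial j : ℝ) * x ^ j := by
  rw [← Finset.sum_fiberwise_of_maps_to (g := fun f : Fin k → Fin M =>
      (Finset.image f Finset.univ).card) (t := Finset.range (k+1))
      (fun f _ => Finset.mem_range.2 (Nat.lt_succ_of_le
        ((Finset.card_image_le).trans (by simp))))]
  refine Finset.sum_congr rfl fun j _ => ?_
  calc (∑ f ∈ Finset.univ.filter (fun f : Fin k → Fin M =>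
          (Finset.image f Finset.univ).card = j), x ^ (Finset.image f Finset.univ).card)
      = ∑ f ∈ Finset.univ.filter (fun f : Fin k → Fin M =>
          (Finset.image f Finset.univ).card = j), x ^ j := by
        refine Finset.sum_congr rfl fun f hf => ?_
        rw [(Finset.mem_filter.1 hf).2]
    _ = _ := by
        rw [Finset.sum_const, count_image_card M k j, nsmul_eq_mul]
        push_cast
        ring

lemma one_sub_sum_le_prod {ι : Type*} (s : Finset ι) (a : ι → ℝ)
    (h0 : ∀ i ∈ s, 0 ≤ a i) (h1 : ∀ i ∈ s, a i ≤ 1) :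
    1 - ∑ i ∈ s, a i ≤ ∏ i ∈ s, (1 - a i) := by
  induction s using Finset.cons_induction with
  | empty => simp
  | cons i s his ih =>
    rw [Finset.prod_cons, Finset.sum_cons]
    have hi0 := h0 i (Finset.mem_cons_self i s)
    have hi1 := h1 i (Finset.mem_cons_self i s)
    have ihs := ih (fun j hj => h0 j (Finset.mem_cons_of_mem hj))
      (fun j hj => h1 j (Finset.mem_cons_of_mem hj))
    have hs0 : (0:ℝ) ≤ ∑ j ∈ s, a j :=
      Finset.sum_nonneg fun j hj => h0 j (Finset.mem_cons_of_mem hj)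
    have hp0 : (0:ℝ) ≤ ∏ j ∈ s, (1 - a j) :=
      Finset.prod_nonneg fun j hj => sub_nonneg.2 (h1 j (Finset.mem_cons_of_mem hj))
    nlinarith

lemma descFactorial_div_le_one (M j : ℕ) (hM : 1 ≤ M) :
    (M.descFactorial j : ℝ) / (M:ℝ) ^ j ≤ 1 := by
  have hMpos : (0:ℝ) < M := by exact_mod_cast hM
  rw [div_le_one (by positivity)]
  exact_mod_cast Nat.cast_le.2 (Nat.descFactorial_le_pow M j)

lemma gauss_le (j : ℕ) : (∑ i ∈ Finset.range j, (i:ℝ)) ≤ (j:ℝ)^2/2 := by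
  induction j with
  | zero => simp
  | succ n ihn =>
    rw [Finset.sum_range_succ]
    push_cast
    nlinarith

lemma le_descFactorial_div (M j : ℕ) (hjM : j ≤ M) (hM : 1 ≤ M) :
    1 - (j:ℝ)^2 / (2*M) ≤ (M.descFactorial j : ℝ) / (M:ℝ) ^ j := by
  have hMpos : (0:ℝ) < M := by exact_mod_cast hM
  have hcast : (M.descFactorial j : ℝ) = ∏ i ∈ Finset.range j, ((M:ℝ) - i) := by
    rw [Nat.descFactorial_eq_prod_range]
    push_cast [Nat.cast_prod]
    refine Finset.prod_congr rfl fun i hi => ?_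
    have : i ≤ M := le_of_lt (lt_of_lt_of_le (Finset.mem_range.1 hi) hjM)
    push_cast [Nat.cast_sub this]
    ring
  have hdiv : (M.descFactorial j : ℝ) / (M:ℝ) ^ j = ∏ i ∈ Finset.range j, (1 - (i:ℝ)/M) := by
    have hMj : (M:ℝ)^j = ∏ _i ∈ Finset.range j, (M:ℝ) := by simp
    rw [hcast, hMj, ← Finset.prod_div_distrib]
    exact Finset.prod_congr rfl fun i _ => by rw [sub_div, div_self hMpos.ne']
  rw [hdiv]
  refine le_trans ?_ (one_sub_sum_le_prod _ _ (fun i _ => by positivity)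
    (fun i hi => by
      rw [div_le_one hMpos]
      exact_mod_cast le_of_lt (lt_of_lt_of_le (Finset.mem_range.1 hi) hjM)))
  have hsum : (∑ i ∈ Finset.range j, (i:ℝ)/M) = (∑ i ∈ Finset.range j, (i:ℝ)) / M :=
    (Finset.sum_div _ _ _).symm
  have h2 : (∑ i ∈ Finset.range j, (i:ℝ)/M) ≤ (j:ℝ)^2/(2*M) := by
    rw [hsum]
    calc (∑ i ∈ Finset.range j, (i:ℝ)) / M ≤ ((j:ℝ)^2/2) / M := by
          gcongr
          exact gauss_le j
      _ = (j:ℝ)^2/(2*M) := by ring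
  linarith

lemma moment_upper (M k : ℕ) (hM : 1 ≤ M) :
    ∑ f : Fin k → Fin M, (1/(M:ℝ)) ^ (Finset.image f Finset.univ).card ≤ (bell k : ℝ) := by
  have hMpos : (0:ℝ) < M := by exact_mod_cast hM
  rw [sum_pow_image_card]
  have hterm : ∀ j : ℕ, ((stirling2 k j * M.descFactorial j : ℕ) : ℝ) * (1/(M:ℝ))^j
      = (stirling2 k j : ℝ) * ((M.descFactorial j : ℝ) / (M:ℝ)^j) := by
    intro j
    push_cast
    rw [one_div, inv_pow]
    ring
  have hbell : (bell k : ℝ) = ∑ j ∈ Finset.range (k+1), (stirling2 k j : ℝ) := by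
    rw [bell]; push_cast; rfl
  rw [hbell]
  push_cast
  refine Finset.sum_le_sum fun j _ => ?_
  rw [show ((stirling2 k j : ℝ) * (M.descFactorial j : ℝ)) * (1/(M:ℝ))^j
      = (stirling2 k j : ℝ) * ((M.descFactorial j : ℝ) / (M:ℝ)^j) by
    rw [one_div, inv_pow]; ring]
  calc (stirling2 k j : ℝ) * ((M.descFactorial j : ℝ) / (M:ℝ)^j)
      ≤ (stirling2 k j : ℝ) * 1 :=
        mul_le_mul_of_nonneg_left (descFactorial_div_le_one M j hM) (by positivity)
    _ = _ := mul_one _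

lemma moment_lower (M k : ℕ) (hkM : k ≤ M) (hM : 1 ≤ M) :
    (bell k : ℝ) * (1 - (k:ℝ)^2/(2*M))
      ≤ ∑ f : Fin k → Fin M, (1/(M:ℝ)) ^ (Finset.image f Finset.univ).card := by
  have hMpos : (0:ℝ) < M := by exact_mod_cast hM
  rw [sum_pow_image_card]
  have hbell : (bell k : ℝ) = ∑ j ∈ Finset.range (k+1), (stirling2 k j : ℝ) := by
    rw [bell]; push_cast; rfl
  rw [hbell, Finset.sum_mul]
  push_cast
  refine Finset.sum_le_sum fun j hj => ?_
  have hjk : j ≤ k := by have := Finset.mem_range.1 hj; omega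
  rw [show ((stirling2 k j : ℝ) * (M.descFactorial j : ℝ)) * (1/(M:ℝ))^j
      = (stirling2 k j : ℝ) * ((M.descFactorial j : ℝ) / (M:ℝ)^j) by
    rw [one_div, inv_pow]; ring]
  refine mul_le_mul_of_nonneg_left ?_ (by positivity)
  refine le_trans ?_ (le_descFactorial_div M j (hjk.trans hkM) hM)
  have hjk2 : (j:ℝ)^2 ≤ (k:ℝ)^2 := by
    have h1 : (j:ℝ) ≤ k := by exact_mod_cast hjk
    nlinarith [Nat.cast_nonneg (α := ℝ) j]
  have hfrac : (j:ℝ)^2/(2*M) ≤ (k:ℝ)^2/(2*M) := by gcongr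
  linarith

set_option maxHeartbeats 2000000 in
theorem stmt_6 {Ω : Type*} [MeasurableSpace Ω] (μ : Measure Ω) [IsProbabilityMeasure μ]
    (M q : ℕ) (hM : 1 ≤ M) (hq : 4 ≤ q) (hqeven : Even q) (hq2M : q ^ 2 ≤ 2 * M)
    (ξ : Fin M → Ω → ℝ)
    (hmeas : ∀ i, Measurable (ξ i))
    (hbool : ∀ i ω, ξ i ω = 0 ∨ ξ i ω = 1)
    (hmean : ∀ i, μ {ω | ξ i ω = 1} = ENNReal.ofReal (1 / M))
    (hind : ∀ t : Finset (Fin M), t.card ≤ q →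
      μ (⋂ i ∈ t, {ω | ξ i ω = 1}) = ∏ i ∈ t, μ {ω | ξ i ω = 1}) :
    (μ {ω | (bell (q / 2) : ℝ) ^ (2 / (q : ℝ)) / 2 ≤ ∑ i, ξ i ω}).toReal ≥
      (1 - (q : ℝ) ^ 2 / (2 * M)) * (bell (q / 2) : ℝ) ^ 2 / (2 * (bell q : ℝ)) := by
  classical
  -- basic numerology
  set m := q / 2 with hmdef
  have hq2m : q = 2 * m := by
    obtain ⟨r, hr⟩ := hqeven; omega
  have hm2 : 2 ≤ m := by omega
  have hqM : q ≤ M := by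
    have h1 : 4*q ≤ q*q := Nat.mul_le_mul_right q hq
    have h2 : q*q ≤ 2*M := by nlinarith
    omega
  have hMpos : (0:ℝ) < M := by exact_mod_cast hM
  have hqpos : (0:ℝ) < q := by exact_mod_cast (by omega : 0 < q)
  -- the partition machinery
  set τ : Ω → Finset (Fin M) := fun ω => Finset.univ.filter (fun i => ξ i ω = 1) with hτ
  set E : Finset (Fin M) → Set Ω := fun T => τ ⁻¹' {T} with hE
  have hA_meas : ∀ i, MeasurableSet {ω | ξ i ω = 1} := fun i =>
    hmeas i (measurableSet_singleton 1)
  have hE_meas : ∀ T, MeasurableSet (E T) := by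
    intro T
    have : E T = ⋂ i : Fin M, {ω | ξ i ω = 1 ↔ i ∈ T} := by
      ext ω
      simp only [hE, hτ, Set.mem_preimage, Set.mem_singleton_iff, Finset.ext_iff,
        Finset.mem_filter, Finset.mem_univ, true_and, Set.mem_iInter, Set.mem_setOf_eq]
    rw [this]
    refine MeasurableSet.iInter fun i => ?_
    by_cases hi : i ∈ T
    · simp only [hi, iff_true]; exact hA_meas i
    · simp only [hi, iff_false]
      exact (hA_meas i).compl
  have key : ∀ 𝒮 : Finset (Finset (Fin M)),
      μ {ω | τ ω ∈ 𝒮} = ∑ T ∈ 𝒮, μ (E T) := by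
    intro 𝒮
    have hU : {ω | τ ω ∈ 𝒮} = ⋃ T ∈ 𝒮, E T := by
      ext ω; simp [hE]
    rw [hU, measure_biUnion_finset ?_ (fun T _ => hE_meas T)]
    intro T _ T' _ hTT'
    refine Set.disjoint_left.2 fun ω h1 h2 => hTT' ?_
    simp only [hE, Set.mem_preimage, Set.mem_singleton_iff] at h1 h2
    rw [← h1, ← h2]
  set p : Finset (Fin M) → ℝ := fun T => (μ (E T)).toReal with hp
  have keyR : ∀ 𝒮 : Finset (Finset (Fin M)),
      (μ {ω | τ ω ∈ 𝒮}).toReal = ∑ T ∈ 𝒮, p T := by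
    intro 𝒮
    rw [key 𝒮, ENNReal.toReal_sum fun T _ => measure_ne_top μ _]
  have p0 : ∀ T, 0 ≤ p T := fun T => ENNReal.toReal_nonneg
  have psum : ∑ T : Finset (Fin M), p T = 1 := by
    rw [← keyR Finset.univ]
    simp
  have hincl : ∀ s : Finset (Fin M), s.card ≤ q →
      ∑ T ∈ Finset.univ.filter (fun T => s ⊆ T), p T = (1 / (M:ℝ)) ^ s.card := by
    intro s hs
    rw [← keyR]
    have h1 : {ω | τ ω ∈ Finset.univ.filter (fun T => s ⊆ T)} = ⋂ i ∈ s, {ω | ξ i ω = 1} := by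
      ext ω
      simp only [Set.mem_setOf_eq, Finset.mem_filter, Finset.mem_univ, true_and,
        Finset.subset_iff, hτ, Set.mem_iInter, Finset.mem_filter, Finset.mem_univ, true_and,
        Set.mem_setOf_eq]
    rw [h1, hind s hs]
    have : ∀ i ∈ s, μ {ω | ξ i ω = 1} = ENNReal.ofReal (1 / (M:ℝ)) := fun i _ => hmean i
    rw [Finset.prod_congr rfl this, Finset.prod_const, ← ENNReal.ofReal_pow (by positivity)]
    rw [ENNReal.toReal_ofReal (by positivity)]
  have hSτ : ∀ ω, (∑ i, ξ i ω) = ((τ ω).card : ℝ) := by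
    intro ω
    rw [hτ]
    simp only [Finset.card_filter]
    push_cast
    refine Finset.sum_congr rfl fun i _ => ?_
    rcases hbool i ω with h | h <;> simp [h]
  have hcount : ∀ (k : ℕ) (T : Finset (Fin M)),
      ((Finset.univ.filter fun f : Fin k → Fin M => Finset.image f Finset.univ ⊆ T).card : ℝ)
        = ((T.card : ℝ)) ^ k := by
    intro k T
    have : (Finset.univ.filter fun f : Fin k → Fin M => Finset.image f Finset.univ ⊆ T)
        = Fintype.piFinset (fun _ : Fin k => T) := by
      ext f
      simp [Finset.image_subset_iff, Fintype.mem_piFinset]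
    rw [this, Fintype.card_piFinset]
    push_cast
    simp
  have hMom : ∀ k : ℕ, k ≤ q →
      ∑ T : Finset (Fin M), ((T.card : ℝ)) ^ k * p T
        = ∑ f : Fin k → Fin M, (1 / (M:ℝ)) ^ (Finset.image f Finset.univ).card := by
    intro k hk
    have step1 : ∀ f : Fin k → Fin M,
        (1 / (M:ℝ)) ^ (Finset.image f Finset.univ).card
          = ∑ T : Finset (Fin M), (if Finset.image f Finset.univ ⊆ T then p T else 0) := by
      intro f
      rw [← Finset.sum_filter, hincl (Finset.image f Finset.univ)
        (le_trans (le_trans Finset.card_image_le (by simp)) hk)]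
    rw [Finset.sum_congr rfl fun f (_ : f ∈ Finset.univ) => step1 f, Finset.sum_comm]
    refine Finset.sum_congr rfl fun T _ => ?_
    rw [← Finset.sum_filter, Finset.sum_const, nsmul_eq_mul, hcount k T]
  -- moment bounds
  have hMomLowm : (bell m : ℝ) * (1 - (m:ℝ)^2/(2*M))
      ≤ ∑ T : Finset (Fin M), ((T.card : ℝ)) ^ m * p T := by
    rw [hMom m (by omega)]
    exact moment_lower M m (by omega) hM
  have hMomUpq : ∑ T : Finset (Fin M), ((T.card : ℝ)) ^ q * p T ≤ (bell q : ℝ) := by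
    rw [hMom q le_rfl]
    exact moment_upper M q hM
  -- threshold
  set Bm : ℝ := (bell m : ℝ) with hBm
  set Bq : ℝ := (bell q : ℝ) with hBq
  have hBm1 : (1:ℝ) ≤ Bm := by rw [hBm]; exact_mod_cast one_le_bell m
  have hBq1 : (1:ℝ) ≤ Bq := by rw [hBq]; exact_mod_cast one_le_bell q
  have hBmpos : (0:ℝ) < Bm := by linarith
  set t : ℝ := Bm ^ (2 / (q:ℝ)) / 2 with htdef
  have ht_pos : 0 < t := div_pos (Real.rpow_pos_of_pos hBmpos _) two_pos
  have ht_pow : t ^ m = Bm / 2 ^ m := by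
    rw [htdef, div_pow]
    congr 1
    rw [← Real.rpow_natCast (Bm ^ (2/(q:ℝ))) m, ← Real.rpow_mul hBmpos.le]
    rw [show (2/(q:ℝ)) * (m:ℕ) = 1 by
      field_simp
      exact_mod_cast hq2m.symm]
    exact Real.rpow_one Bm
  -- the event
  set 𝒯 : Finset (Finset (Fin M)) := Finset.univ.filter (fun T => t ≤ ((T.card : ℕ) : ℝ))
    with h𝒯
  set P : ℝ := ∑ T ∈ 𝒯, p T with hP
  have hPev : (μ {ω | t ≤ ∑ i, ξ i ω}).toReal = P := by
    rw [hP, ← keyR]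
    have hset : {ω | t ≤ ∑ i, ξ i ω} = {ω | τ ω ∈ 𝒯} := by
      ext ω
      simp only [Set.mem_setOf_eq, h𝒯, Finset.mem_filter, Finset.mem_univ, true_and, hSτ ω]
    rw [hset]
  set D : ℝ := ∑ T ∈ 𝒯, ((T.card : ℝ)) ^ m * p T with hD
  -- split bound
  have hsplit : ∑ T : Finset (Fin M), ((T.card : ℝ)) ^ m * p T ≤ t ^ m + D := by
    rw [← Finset.sum_filter_add_sum_filter_not Finset.univ (fun T => t ≤ ((T.card : ℕ) : ℝ))
      (fun T => ((T.card : ℝ)) ^ m * p T)]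
    rw [add_comm (t ^ m) D]
    refine add_le_add le_rfl ?_
    calc ∑ T ∈ Finset.univ.filter (fun T => ¬ t ≤ ((T.card:ℕ):ℝ)), ((T.card : ℝ)) ^ m * p T
        ≤ ∑ T ∈ Finset.univ.filter (fun T => ¬ t ≤ ((T.card:ℕ):ℝ)), t ^ m * p T := by
          refine Finset.sum_le_sum fun T hT => ?_
          have hTc : ((T.card : ℕ) : ℝ) < t := not_le.1 (Finset.mem_filter.1 hT).2
          exact mul_le_mul_of_nonneg_right
            (pow_le_pow_left₀ (Nat.cast_nonneg _) hTc.le m) (p0 T)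
      _ = t ^ m * ∑ T ∈ Finset.univ.filter (fun T => ¬ t ≤ ((T.card:ℕ):ℝ)), p T := by
          rw [Finset.mul_sum]
      _ ≤ t ^ m * 1 := by
          refine mul_le_mul_of_nonneg_left ?_ (by positivity)
          rw [← psum]
          exact Finset.sum_le_sum_of_subset_of_nonneg (Finset.filter_subset _ _)
            (fun T _ _ => p0 T)
      _ = t ^ m := mul_one _
  -- Cauchy-Schwarz
  have hCS : D ^ 2 ≤ (∑ T : Finset (Fin M), ((T.card : ℝ)) ^ q * p T) * P := by
    have h1 : D = ∑ T ∈ 𝒯, (((T.card : ℝ)) ^ m * Real.sqrt (p T)) * Real.sqrt (p T) := by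
      refine Finset.sum_congr rfl fun T _ => ?_
      rw [mul_assoc, Real.mul_self_sqrt (p0 T)]
    have h2 := Finset.sum_mul_sq_le_sq_mul_sq 𝒯
      (fun T => ((T.card : ℝ)) ^ m * Real.sqrt (p T)) (fun T => Real.sqrt (p T))
    rw [← h1] at h2
    refine h2.trans ?_
    have h3 : ∀ T ∈ 𝒯, (((T.card : ℝ)) ^ m * Real.sqrt (p T)) ^ 2 = ((T.card : ℝ)) ^ q * p T := by
      intro T _
      rw [mul_pow, Real.sq_sqrt (p0 T), ← pow_mul]
      congr 2
      omega
    have h4 : ∀ T ∈ 𝒯, (Real.sqrt (p T)) ^ 2 = p T := fun T _ => Real.sq_sqrt (p0 T)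
    rw [Finset.sum_congr rfl h3, Finset.sum_congr rfl h4]
    refine mul_le_mul_of_nonneg_right ?_ ?_
    · exact Finset.sum_le_sum_of_subset_of_nonneg (Finset.filter_subset _ _)
        (fun T _ _ => mul_nonneg (pow_nonneg (Nat.cast_nonneg _) _) (p0 T))
    · exact Finset.sum_nonneg fun T _ => p0 T
  -- D ≤ Mom q
  have hDQ : D ≤ ∑ T : Finset (Fin M), ((T.card : ℝ)) ^ q * p T := by
    calc D ≤ ∑ T ∈ 𝒯, ((T.card : ℝ)) ^ q * p T := by
          refine Finset.sum_le_sum fun T hT => ?_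
          have hTc : t ≤ ((T.card : ℕ) : ℝ) := (Finset.mem_filter.1 hT).2
          have h1T : (1:ℝ) ≤ ((T.card : ℕ) : ℝ) := by
            have : (0:ℝ) < ((T.card:ℕ):ℝ) := lt_of_lt_of_le ht_pos hTc
            exact_mod_cast Nat.one_le_iff_ne_zero.2 (by exact_mod_cast this.ne')
          exact mul_le_mul_of_nonneg_right (pow_le_pow_right₀ h1T (by omega)) (p0 T)
      _ ≤ _ := Finset.sum_le_sum_of_subset_of_nonneg (Finset.filter_subset _ _)
          (fun T _ _ => mul_nonneg (pow_nonneg (Nat.cast_nonneg _) _) (p0 T))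
  -- numerics
  set ε : ℝ := (q:ℝ)^2/(2*M) with hε
  have hε0 : 0 ≤ ε := by positivity
  have hε1 : ε ≤ 1 := by
    rw [hε, div_le_one (by positivity)]
    exact_mod_cast hq2M
  have hm_cast : ((m:ℕ):ℝ) = (q:ℝ)/2 := by
    have : ((q:ℕ):ℝ) = 2*((m:ℕ):ℝ) := by exact_mod_cast hq2m
    linarith
  have hMomLow' : Bm * (1 - ε/4) ≤ ∑ T : Finset (Fin M), ((T.card : ℝ)) ^ m * p T := by
    refine le_trans (le_of_eq ?_) hMomLowm
    rw [hm_cast, hε]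
    ring
  have h2m4 : (4:ℝ) ≤ 2 ^ m := by
    calc (4:ℝ) = 2 ^ 2 := by norm_num
      _ ≤ 2 ^ m := pow_le_pow_right₀ one_le_two hm2
  have ht_le : t ^ m ≤ Bm / 4 := by
    rw [ht_pow]
    gcongr
  have hPnn : 0 ≤ P := Finset.sum_nonneg fun T _ => p0 T
  rw [ge_iff_le, hPev]
  -- make everything opaque and finish with pure arithmetic
  set Momm : ℝ := ∑ T : Finset (Fin M), ((T.card : ℝ)) ^ m * p T with hMommDef
  set Momq : ℝ := ∑ T : Finset (Fin M), ((T.card : ℝ)) ^ q * p T with hMomqDef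
  clear_value Momm Momq D P t Bm Bq ε
  clear hMommDef hMomqDef hPev hP hD h𝒯 𝒯 hε htdef hτ hE hp hincl psum hMom hcount hSτ
    key keyR hmean hind hbool hmeas hA_meas hE_meas p0 hMomLowm p τ E hm_cast ht_pow ξ
  -- now: hMomLow' : Bm * (1 - ε/4) ≤ Momm ; hMomUpq : Momq ≤ Bq ; hsplit : Momm ≤ t^m + D
  -- hCS : D^2 ≤ Momq * P ; hDQ : D ≤ Momq ; ht_le : t^m ≤ Bm/4
  have hD_low : Bm * (3 - ε) / 4 ≤ D := by linarith
  have hD_pos : 0 < D := by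
    have h3ε : (2:ℝ) ≤ 3 - ε := by linarith
    have hm2' : (1:ℝ)*2 ≤ Bm*(3-ε) := mul_le_mul hBm1 h3ε (by norm_num) (by linarith)
    linarith
  have hMomq_pos : 0 < Momq := lt_of_lt_of_le hD_pos hDQ
  have hPbound : D^2 / Momq ≤ P := by
    rw [div_le_iff₀ hMomq_pos]
    linarith [hCS]
  refine le_trans ?_ hPbound
  calc (1 - ε) * Bm ^ 2 / (2 * Bq)
      ≤ (Bm * (3 - ε) / 4)^2 / Bq := by
        rw [div_le_div_iff₀ (by linarith : (0:ℝ) < 2*Bq) (by linarith : (0:ℝ) < Bq)]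
        have hkey : (Bm*(3-ε)/4)^2 * (2*Bq) - (1-ε)*Bm^2*Bq = Bq * (Bm*(1+ε))^2 / 8 := by
          ring
        have h8 : 0 ≤ Bq * (Bm*(1+ε))^2 / 8 := by
          have := mul_nonneg (le_trans zero_le_one hBq1) (sq_nonneg (Bm*(1+ε)))
          linarith
        linarith
    _ ≤ D^2 / Momq := by
        have hXnn : 0 ≤ Bm*(3-ε)/4 := by
          have h3 : (0:ℝ) ≤ 3-ε := by linarith
          have := mul_nonneg (le_trans zero_le_one hBm1) h3
          linarith
        have hXD : (Bm*(3-ε)/4)^2 ≤ D^2 := pow_le_pow_left₀ hXnn hD_low 2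
        exact div_le_div₀ (sq_nonneg D) hXD hMomq_pos hMomUpq
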